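/- Let I be a squarefree monomial ideal in R = K[x₁,x₂,x₃] of height 2 with R/I Cohen–Macaulay and indeg I ≥ 2. Then I = (x₁x₂, x₁x₃, x₂x₃) (up to permutation of variables), and ara(I) = 2. -/

import Mathlib

set_option synthInstance.maxHeartbeats 1000000
set_option maxHeartbeats 1000000

open MvPolynomial Ideal CategoryTheory

noncomputable section

/-- The arithmetical rank of an ideal: the least `r` such that some `r` elements
generate `I` up to radical. -/
noncomputable def ara {R : Type*} [CommRing R] (I : Ideal R) : ℕ :=
  sInf {r | ∃ a : Fin r → R, Ideal.radical (Ideal.span (Set.range a)) = Ideal.radical I}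

/-- The height of an ideal: the infimum of the heights of the primes containing it. -/
noncomputable def idealHeight {R : Type*} [CommRing R] (I : Ideal R) : ℕ∞ :=
  ⨅ (P : PrimeSpectrum R) (_ : I ≤ P.asIdeal), Order.height P

/-- A squarefree monomial ideal: one generated by squarefree monomials. -/
def IsSqfreeMonomialIdeal {K : Type*} [Field K] {n : ℕ} (I : Ideal (MvPolynomial (Fin n) K)) :
    Prop :=
  ∃ S : Set (Finset (Fin n)), I = Ideal.span ((fun s : Finset (Fin n) => ∏ i ∈ s, X i) '' S)

/-- `R/I` is Cohen--Macaulay (graded case): there is a regular sequence on `R/I`,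
consisting of elements of the irrelevant maximal ideal, whose length equals the
Krull dimension of `R/I`. -/
def QuotIsCM {K : Type*} [Field K] {n : ℕ} (I : Ideal (MvPolynomial (Fin n) K)) : Prop :=
  ∃ rs : List (MvPolynomial (Fin n) K),
    (∀ r ∈ rs, r ∈ Ideal.span (Set.range (X : Fin n → MvPolynomial (Fin n) K))) ∧
    RingTheory.Sequence.IsRegular (MvPolynomial (Fin n) K ⧸ I)
      (rs.map (Ideal.Quotient.mk I)) ∧
    ((rs.length : ℕ∞) : WithBot ℕ∞) = ringKrullDim (MvPolynomial (Fin n) K ⧸ I)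


section Aux
variable {K : Type*} [Field K]

theorem primeX (i : Fin 3) : Prime (X i : MvPolynomial (Fin 3) K) := by
  have h0 : Prime (X 0 : MvPolynomial (Fin 3) K) := by
    rw [← MulEquiv.prime_iff (finSuccEquiv K 2).toMulEquiv]
    show Prime (finSuccEquiv K 2 (X 0))
    rw [finSuccEquiv_X_zero]
    exact Polynomial.prime_X
  rw [← MulEquiv.prime_iff (renameEquiv K (Equiv.swap 0 i)).toMulEquiv] at h0
  have : (renameEquiv K (Equiv.swap 0 i)).toMulEquiv (X 0) = X i := by
    show (renameEquiv K (Equiv.swap 0 i)) (X 0) = X i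
    rw [renameEquiv_apply, rename_X, Equiv.swap_apply_left]
  rwa [this] at h0

theorem heightX (i : Fin 3) (P : PrimeSpectrum (MvPolynomial (Fin 3) K))
    (hP : P.asIdeal = Ideal.span {X i}) : Order.height P ≤ 1 := by
  have h1 : ((1:ℕ) : ℕ∞) = 1 := rfl
  rw [← h1, Order.height_le_coe_iff]
  intro Q hQ
  have hQP : Q.asIdeal < P.asIdeal := (PrimeSpectrum.asIdeal_lt_asIdeal Q P).mpr hQ
  have hXQ : X i ∉ Q.asIdeal := by
    intro hmem
    refine hQP.ne ?_
    refine le_antisymm hQP.le ?_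
    rw [hP, Ideal.span_le, Set.singleton_subset_iff]
    exact hmem
  have key : ∀ n : ℕ, ∀ g ∈ Q.asIdeal, (X i)^n ∣ g := by
    intro n
    induction n with
    | zero => intro g _; simpa using one_dvd g
    | succ n ih =>
      intro g hg
      have hgX : g ∈ Ideal.span ({X i} : Set (MvPolynomial (Fin 3) K)) := hP ▸ hQP.le hg
      obtain ⟨h, rfl⟩ := Ideal.mem_span_singleton.mp hgX
      have hh : h ∈ Q.asIdeal := by
        rcases Q.isPrime.mem_or_mem hg with h' | h'
        · exact absurd h' hXQ
        · exact h'
      obtain ⟨c, rfl⟩ := ih h hh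
      exact ⟨c, by ring⟩
  have hbot : Q.asIdeal = ⊥ := by
    rw [eq_bot_iff]
    intro g hg
    by_contra hne
    have hne' : g ≠ 0 := by simpa using hne
    obtain ⟨n, hn⟩ := FiniteMultiplicity.of_prime_left (primeX i) hne'
    exact hn (key (n+1) g hg)
  have : Order.height Q = 0 := by
    rw [Order.height_eq_zero]
    intro Q' _
    show Q.asIdeal ≤ Q'.asIdeal
    rw [hbot]
    exact bot_le
  rw [this]; exact zero_lt_one

theorem classify (I : Ideal (MvPolynomial (Fin 3) K))
    (hsqf : IsSqfreeMonomialIdeal I) (hht : idealHeight I = 2)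
    (hindeg : ∀ i : Fin 3, X i ∉ I) :
    I = Ideal.span {(X 0 * X 1 : MvPolynomial (Fin 3) K), X 0 * X 2, X 1 * X 2} := by
  obtain ⟨S, hS⟩ := hsqf
  set M : Finset (Fin 3) → MvPolynomial (Fin 3) K := fun s => ∏ i ∈ s, X i with hM
  -- small sets are not in S
  have hcard : ∀ s ∈ S, 2 ≤ s.card := by
    intro s hs
    by_contra hlt
    have key : ∀ t : Finset (Fin 3), ¬ 2 ≤ t.card → t = ∅ ∨ t = {0} ∨ t = {1} ∨ t = {2} := by
      decide
    have := key s hlt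
    have hmem : M s ∈ I := hS ▸ Ideal.subset_span ⟨s, hs, rfl⟩
    rcases this with rfl | rfl | rfl | rfl
    · simp only [hM, Finset.prod_empty] at hmem
      have htop : I = ⊤ := I.eq_top_iff_one.mpr hmem
      exact hindeg 0 (htop ▸ Submodule.mem_top)
    all_goals simp only [hM, Finset.prod_singleton] at hmem
    · exact hindeg 0 hmem
    · exact hindeg 1 hmem
    · exact hindeg 2 hmem
  -- the list of possible sets
  have hposs : ∀ s ∈ S, s = {0,1} ∨ s = {0,2} ∨ s = {1,2} ∨ s = Finset.univ := by
    intro s hs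
    have key : ∀ t : Finset (Fin 3), 2 ≤ t.card → t = {0,1} ∨ t = {0,2} ∨ t = {1,2} ∨ t = Finset.univ := by
      decide
    exact key s (hcard s hs)
  -- if I is contained in (X i), contradiction with height
  have hcontra : ∀ i : Fin 3, I ≤ Ideal.span ({X i} : Set (MvPolynomial (Fin 3) K)) → False := by
    intro i hle
    have hprime : (Ideal.span ({X i} : Set (MvPolynomial (Fin 3) K))).IsPrime := by
      rw [Ideal.span_singleton_prime (X_ne_zero i)]
      exact primeX i
    set P : PrimeSpectrum (MvPolynomial (Fin 3) K) := ⟨_, hprime⟩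
    have h2 : idealHeight I ≤ 1 := by
      have step : idealHeight I ≤ Order.height P := by
        unfold idealHeight
        exact iInf₂_le P hle
      exact le_trans step (heightX i P rfl)
    rw [hht] at h2
    norm_num at h2
  have e01 : M {0,1} = X 0 * X 1 := Finset.prod_pair (by decide)
  have e02 : M {0,2} = X 0 * X 2 := Finset.prod_pair (by decide)
  have e12 : M {1,2} = X 1 * X 2 := Finset.prod_pair (by decide)
  have euniv : M Finset.univ = X 0 * X 1 * X 2 := Fin.prod_univ_three X
  by_cases h01 : ({0,1} : Finset (Fin 3)) ∈ S
  · by_cases h02 : ({0,2} : Finset (Fin 3)) ∈ S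
    · by_cases h12 : ({1,2} : Finset (Fin 3)) ∈ S
      · apply le_antisymm
        · rw [hS, Ideal.span_le]
          rintro _ ⟨s, hs, rfl⟩
          rcases hposs s hs with rfl | rfl | rfl | rfl
          · rw [e01]; exact Ideal.subset_span (by simp)
          · rw [e02]; exact Ideal.subset_span (by simp)
          · rw [e12]; exact Ideal.subset_span (by simp)
          · rw [euniv]
            exact Ideal.mul_mem_right _ _ (Ideal.subset_span (by simp))
        · rw [Ideal.span_le]
          rintro x hx
          simp only [Set.mem_insert_iff, Set.mem_singleton_iff] at hx
          rcases hx with rfl | rfl | rfl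
          · exact hS ▸ Ideal.subset_span ⟨_, h01, e01⟩
          · exact hS ▸ Ideal.subset_span ⟨_, h02, e02⟩
          · exact hS ▸ Ideal.subset_span ⟨_, h12, e12⟩
      · exfalso
        apply hcontra 0
        rw [hS, Ideal.span_le]
        rintro _ ⟨s, hs, rfl⟩
        rcases hposs s hs with rfl | rfl | rfl | rfl
        · exact Ideal.mem_span_singleton.mpr (Finset.dvd_prod_of_mem X (by decide))
        · exact Ideal.mem_span_singleton.mpr (Finset.dvd_prod_of_mem X (by decide))
        · exact absurd hs h12
        · exact Ideal.mem_span_singleton.mpr (Finset.dvd_prod_of_mem X (by decide))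
    · exfalso
      apply hcontra 1
      rw [hS, Ideal.span_le]
      rintro _ ⟨s, hs, rfl⟩
      rcases hposs s hs with rfl | rfl | rfl | rfl
      · exact Ideal.mem_span_singleton.mpr (Finset.dvd_prod_of_mem X (by decide))
      · exact absurd hs h02
      · exact Ideal.mem_span_singleton.mpr (Finset.dvd_prod_of_mem X (by decide))
      · exact Ideal.mem_span_singleton.mpr (Finset.dvd_prod_of_mem X (by decide))
  · exfalso
    apply hcontra 2
    rw [hS, Ideal.span_le]
    rintro _ ⟨s, hs, rfl⟩
    rcases hposs s hs with rfl | rfl | rfl | rfl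
    · exact absurd hs h01
    · exact Ideal.mem_span_singleton.mpr (Finset.dvd_prod_of_mem X (by decide))
    · exact Ideal.mem_span_singleton.mpr (Finset.dvd_prod_of_mem X (by decide))
    · exact Ideal.mem_span_singleton.mpr (Finset.dvd_prod_of_mem X (by decide))

theorem ara_eq_two :
    ara (Ideal.span {(X 0 * X 1 : MvPolynomial (Fin 3) K), X 0 * X 2, X 1 * X 2}) = 2 := by
  classical
  set J : Ideal (MvPolynomial (Fin 3) K) := Ideal.span {X 0 * X 1, X 0 * X 2, X 1 * X 2} with hJ
  have hm01 : (X 0 * X 1 : MvPolynomial (Fin 3) K) ∈ J := Ideal.subset_span (by simp)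
  have hm02 : (X 0 * X 2 : MvPolynomial (Fin 3) K) ∈ J := Ideal.subset_span (by simp)
  have hm12 : (X 1 * X 2 : MvPolynomial (Fin 3) K) ∈ J := Ideal.subset_span (by simp)
  have h2mem : ∃ a : Fin 2 → MvPolynomial (Fin 3) K,
      (Ideal.span (Set.range a)).radical = J.radical := by
    refine ⟨![X 0 * X 1, X 0 * X 2 + X 1 * X 2], ?_⟩
    have hrange : Set.range ![(X 0 * X 1 : MvPolynomial (Fin 3) K), X 0 * X 2 + X 1 * X 2] =
        {(X 0 * X 1 : MvPolynomial (Fin 3) K), X 0 * X 2 + X 1 * X 2} := by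
      ext x
      simp [Fin.exists_fin_two]
      tauto
    rw [hrange]
    apply le_antisymm
    · apply Ideal.radical_mono
      rw [Ideal.span_le]
      rintro x hx
      simp only [Set.mem_insert_iff, Set.mem_singleton_iff] at hx
      rcases hx with rfl | rfl
      · exact hm01
      · exact J.add_mem hm02 hm12
    · have hle : J ≤ (Ideal.span {(X 0 * X 1 : MvPolynomial (Fin 3) K),
          X 0 * X 2 + X 1 * X 2}).radical := by
        rw [hJ, Ideal.span_le]
        rintro x hx
        simp only [Set.mem_insert_iff, Set.mem_singleton_iff] at hx
        rcases hx with rfl | rfl | rfl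
        · exact Ideal.le_radical (Ideal.subset_span (by simp))
        · exact Ideal.mem_radical_iff.mpr
            ⟨2, Ideal.mem_span_pair.mpr ⟨-(X 2 ^ 2), X 0 * X 2, by ring⟩⟩
        · exact Ideal.mem_radical_iff.mpr
            ⟨2, Ideal.mem_span_pair.mpr ⟨-(X 2 ^ 2), X 1 * X 2, by ring⟩⟩
      calc J.radical
          ≤ ((Ideal.span {(X 0 * X 1 : MvPolynomial (Fin 3) K),
              X 0 * X 2 + X 1 * X 2}).radical).radical := Ideal.radical_mono hle
        _ = _ := Ideal.radical_idem _
  have hlb : ∀ r : ℕ, (∃ a : Fin r → MvPolynomial (Fin 3) K,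
      (Ideal.span (Set.range a)).radical = J.radical) → 2 ≤ r := by
    rintro r ⟨a, ha⟩
    by_contra hlt
    push_neg at hlt
    interval_cases r
    · rw [Set.range_eq_empty a, Ideal.span_empty, Ideal.radical_bot_of_noZeroDivisors] at ha
      have hx : (X 0 * X 1 : MvPolynomial (Fin 3) K) ∈ (⊥ : Ideal (MvPolynomial (Fin 3) K)) := by
        rw [ha]; exact Ideal.le_radical hm01
      rw [Ideal.mem_bot] at hx
      exact mul_ne_zero (X_ne_zero _) (X_ne_zero _) hx
    · rw [Set.range_unique] at ha
      set f : MvPolynomial (Fin 3) K := a default with hf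
      have hdvd : ∀ m : MvPolynomial (Fin 3) K, m ∈ J → ∃ n : ℕ, f ∣ m ^ n := by
        intro m hm
        have hm' : m ∈ (Ideal.span {f}).radical := by
          rw [ha]; exact Ideal.le_radical hm
        obtain ⟨n, hn⟩ := Ideal.mem_radical_iff.mp hm'
        exact ⟨n, Ideal.mem_span_singleton.mp hn⟩
      obtain ⟨n1, h1⟩ := hdvd _ hm01
      obtain ⟨n2, h2⟩ := hdvd _ hm02
      obtain ⟨n3, h3⟩ := hdvd _ hm12
      by_cases hf0 : f = 0
      · rw [hf0, zero_dvd_iff] at h1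
        exact pow_ne_zero _ (mul_ne_zero (X_ne_zero _) (X_ne_zero _)) h1
      by_cases hfu : IsUnit f
      · have htop : (Ideal.span {f}).radical = ⊤ := by
          rw [Ideal.span_singleton_eq_top.mpr hfu]
          exact Ideal.radical_top _
        rw [htop] at ha
        have hJtop : J = ⊤ := Ideal.radical_eq_top.mp ha.symm
        have h1J : (1 : MvPolynomial (Fin 3) K) ∈ J := hJtop ▸ Submodule.mem_top
        have hker : J ≤ RingHom.ker (constantCoeff : MvPolynomial (Fin 3) K →+* K) := by
          rw [hJ, Ideal.span_le]
          rintro x hx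
          simp only [Set.mem_insert_iff, Set.mem_singleton_iff] at hx
          rcases hx with rfl | rfl | rfl <;> simp [RingHom.mem_ker]
        have := hker h1J
        rw [RingHom.mem_ker] at this
        simp at this
      · obtain ⟨p, hpirr, hpf⟩ := WfDvdMonoid.exists_irreducible_factor hfu hf0
        have hp : Prime p := (UniqueFactorizationMonoid.irreducible_iff_prime).mp hpirr
        have key : ∀ i j : Fin 3, i ≠ j → p ∣ X i → p ∣ X j → False := by
          intro i j hij hpi hpj
          have hassoc := hpirr.associated_of_dvd ((primeX i).irreducible) hpi
          exact hij (X_dvd_X.mp (hassoc.symm.dvd.trans hpj))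
        have dv : ∀ (i j : Fin 3) (n : ℕ), f ∣ (X i * X j) ^ n → p ∣ X i ∨ p ∣ X j := by
          intro i j n hdv
          have hpn : p ∣ (X i * X j) ^ n := hpf.trans hdv
          have := hp.dvd_of_dvd_pow hpn
          exact hp.dvd_mul.mp this
        rcases dv 0 1 n1 h1 with c1 | c1 <;> rcases dv 0 2 n2 h2 with c2 | c2 <;>
          rcases dv 1 2 n3 h3 with c3 | c3
        · exact key 0 1 (by decide) c1 c3
        · exact key 0 2 (by decide) c1 c3
        · exact key 0 1 (by decide) c1 c3
        · exact key 0 2 (by decide) c1 c3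
        · exact key 1 0 (by decide) c1 c2
        · exact key 1 0 (by decide) c1 c2
        · exact key 1 2 (by decide) c1 c2
        · exact key 1 2 (by decide) c1 c2
  apply le_antisymm
  · exact Nat.sInf_le h2mem
  · exact le_csInf ⟨2, h2mem⟩ hlb

end Aux

/-- In three variables, a height-2 Cohen--Macaulay squarefree monomial ideal with
`indeg I ≥ 2` is `(x₁x₂, x₁x₃, x₂x₃)`, and `ara I = 2`. -/
theorem stmt11 (K : Type*) [Field K] (I : Ideal (MvPolynomial (Fin 3) K))
    (hsqf : IsSqfreeMonomialIdeal I) (hht : idealHeight I = 2) (hcm : QuotIsCM I)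
    (hindeg : ∀ i : Fin 3, X i ∉ I) :
    I = Ideal.span {(X 0 * X 1 : MvPolynomial (Fin 3) K), X 0 * X 2, X 1 * X 2} ∧
      ara I = 2 := by
  have hI := classify I hsqf hht hindeg
  exact ⟨hI, hI ▸ ara_eq_two⟩
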